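/- arXiv:1605.02809 — 10 statements merged into one kernel-verified Lean document; each statement's English description precedes it below -/
import Mathlib

section
/- Let ψ : ℝ → ℝ be twice differentiable on an open set containing (0,1], with ψ(x) > 0 and ψ'(x) > 0 for all x ∈ (0,1], and ψ(1) = 1. Let κ ∈ ℝ. Then the following are equivalent: (i) ψ(x)·ψ''(x) = κ·ψ'(x)² for all x ∈ (0,1]; (ii) ψ'(x) = ψ'(1)·ψ(x)^κ for all x ∈ (0,1] (real power). -/
/-- A univariate pgf `ψ`, twice differentiable on an open set containing `(0,1]`,
positive with positive derivative on `(0,1]` and with `ψ 1 = 1`, satisfies the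
Poisson-type condition `ψ·ψ'' = κ·(ψ')²` on `(0,1]` if and only if
`ψ' x = ψ' 1 · (ψ x)^κ` on `(0,1]` (real power). -/
theorem poisson_type_iff (ψ : ℝ → ℝ) (U : Set ℝ) (hU : IsOpen U)
    (hsub : Set.Ioc (0 : ℝ) 1 ⊆ U)
    (hd1 : DifferentiableOn ℝ ψ U) (hd2 : DifferentiableOn ℝ (deriv ψ) U)
    (hpos : ∀ x ∈ Set.Ioc (0 : ℝ) 1, 0 < ψ x)
    (hpos' : ∀ x ∈ Set.Ioc (0 : ℝ) 1, 0 < deriv ψ x)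
    (hψ1 : ψ 1 = 1) (κ : ℝ) :
    (∀ x ∈ Set.Ioc (0 : ℝ) 1, ψ x * deriv (deriv ψ) x = κ * (deriv ψ x) ^ 2) ↔
      (∀ x ∈ Set.Ioc (0 : ℝ) 1, deriv ψ x = deriv ψ 1 * (ψ x) ^ κ) := by
  have h1mem : (1 : ℝ) ∈ Set.Ioc (0 : ℝ) 1 := ⟨one_pos, le_refl 1⟩
  have hder1 : ∀ t ∈ Set.Ioc (0 : ℝ) 1, HasDerivAt ψ (deriv ψ t) t := fun t ht =>
    (hd1.differentiableAt (hU.mem_nhds (hsub ht))).hasDerivAt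
  have hder2 : ∀ t ∈ Set.Ioc (0 : ℝ) 1, HasDerivAt (deriv ψ) (deriv (deriv ψ) t) t := fun t ht =>
    (hd2.differentiableAt (hU.mem_nhds (hsub ht))).hasDerivAt
  constructor
  · intro h x hx
    set F : ℝ → ℝ := fun y => deriv ψ y * ψ y ^ (-κ) with hF
    have hF0 : ∀ t ∈ Set.Ioo (0 : ℝ) 1, HasDerivAt F 0 t := by
      intro t ht
      have ht' : t ∈ Set.Ioc (0 : ℝ) 1 := ⟨ht.1, le_of_lt ht.2⟩
      have ha : ψ t ≠ 0 := ne_of_gt (hpos t ht')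
      have h3 : HasDerivAt (fun y => ψ y ^ (-κ))
          (deriv ψ t * (-κ) * ψ t ^ (-κ - 1)) t :=
        (hder1 t ht').rpow_const (Or.inl ha)
      have h4 := (hder2 t ht').mul h3
      convert h4 using 1
      case e'_4 => rfl
      case e'_5 => rfl
      case e'_8 => rfl
      have hr : ψ t ^ (-κ) = ψ t ^ (-κ - 1) * ψ t := by
        rw [← Real.rpow_add_one ha]; ring_nf
      have hEq := h t ht'
      rw [hr]
      linear_combination (-(ψ t ^ (-κ - 1))) * hEq
    have hcont : ContinuousOn F (Set.Icc x 1) := by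
      intro t ht
      have ht' : t ∈ Set.Ioc (0 : ℝ) 1 := ⟨lt_of_lt_of_le hx.1 ht.1, ht.2⟩
      exact (((hder2 t ht').continuousAt).mul
        (((hder1 t ht').continuousAt).rpow_const
          (Or.inl (ne_of_gt (hpos t ht'))))).continuousWithinAt
    have hconst := constant_of_has_deriv_right_zero hcont
      (fun t ht => (hF0 t ⟨lt_of_lt_of_le hx.1 ht.1, ht.2⟩).hasDerivWithinAt) 1
      ⟨hx.2, le_refl 1⟩
    -- hconst : F 1 = F x
    have hψx := hpos x hx
    have hF1 : F 1 = deriv ψ 1 := by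
      simp [hF, hψ1]
    have hneg : ψ x ^ (-κ) = (ψ x ^ κ)⁻¹ := Real.rpow_neg (le_of_lt hψx) κ
    have hκpos : (0 : ℝ) < ψ x ^ κ := Real.rpow_pos_of_pos hψx κ
    have : deriv ψ x * ψ x ^ (-κ) = deriv ψ 1 := by rw [← hF1]; exact hconst.symm
    rw [hneg] at this
    field_simp at this
    linarith [this]
  · intro h x hx
    set c := deriv ψ 1 with hc
    have hψx := hpos x hx
    have ha : ψ x ≠ 0 := ne_of_gt hψx
    have hud : UniqueDiffWithinAt ℝ (Set.Ioc (0 : ℝ) 1) x :=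
      uniqueDiffOn_Ioc 0 1 x hx
    have hA : HasDerivWithinAt (deriv ψ) (deriv (deriv ψ) x) (Set.Ioc (0 : ℝ) 1) x :=
      (hder2 x hx).hasDerivWithinAt
    have hg : HasDerivAt (fun y => c * ψ y ^ κ)
        (c * (deriv ψ x * κ * ψ x ^ (κ - 1))) x :=
      ((hder1 x hx).rpow_const (Or.inl ha)).const_mul c
    have hB : HasDerivWithinAt (fun y => c * ψ y ^ κ)
        (deriv (deriv ψ) x) (Set.Ioc (0 : ℝ) 1) x :=
      hA.congr (fun t ht => (h t ht).symm) (h x hx).symm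
    have huniq : deriv (deriv ψ) x = c * (deriv ψ x * κ * ψ x ^ (κ - 1)) := by
      rw [← hB.derivWithin hud, hg.hasDerivWithinAt.derivWithin hud]
    have hrw : ψ x * ψ x ^ (κ - 1) = ψ x ^ κ := by
      rw [mul_comm, ← Real.rpow_add_one ha]; ring_nf
    have hx' := h x hx
    rw [huniq]
    calc ψ x * (c * (deriv ψ x * κ * ψ x ^ (κ - 1)))
        = κ * (c * (ψ x * ψ x ^ (κ - 1))) * deriv ψ x := by ring
      _ = κ * (c * ψ x ^ κ) * deriv ψ x := by rw [hrw]
      _ = κ * (deriv ψ x) ^ 2 := by rw [← hx']; ring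
end

section
/- Let r ≥ 1, let ψ : ℝ^r → ℝ be continuously differentiable with ψ(𝟏) = 1, let β ∈ ℝ^r, α_S > 0 and T > 0. Suppose S : [0,T] → ℝ, Θ : [0,T] → ℝ^r and SI : [0,T] → ℝ^r are such that for all t ∈ [0,T] and all j: ∂_jψ(Θ(t)) ≠ 0, Θ_j'(t) = −β_j·SI_j(t)/(α_S·∂_jψ(Θ(t))) and S'(t) = −∑_{j=1}^r β_j·SI_j(t), with Θ(0) = 𝟏 and S(0) = α_S. Then S(t) = α_S·ψ(Θ(t)) for all t ∈ [0,T]. -/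
/-- Partial derivative of `ψ : (Fin r → ℝ) → ℝ` in the `j`-th coordinate at `x`. -/
noncomputable def pd {r : ℕ} (j : Fin r) (ψ : (Fin r → ℝ) → ℝ) (x : Fin r → ℝ) : ℝ :=
  deriv (fun t => ψ (Function.update x j t)) (x j)

lemma pd_eq_fderiv {r : ℕ} (ψ : (Fin r → ℝ) → ℝ) (hC : ContDiff ℝ 1 ψ)
    (x : Fin r → ℝ) (j : Fin r) :
    pd j ψ x = fderiv ℝ ψ x (Pi.single j 1) := by
  have hupd : HasDerivAt (fun t : ℝ => Function.update x j t) (Pi.single j 1) (x j) := by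
    rw [hasDerivAt_pi]
    intro i
    by_cases h : i = j
    · subst h
      simp only [Function.update_self, Pi.single_eq_same]
      simpa using (hasDerivAt_id' (x i))
    · simp only [Function.update_apply, Pi.single_apply, if_neg h]
      simpa [h] using (hasDerivAt_const (x j) (x i))
  have hψ : HasFDerivAt ψ (fderiv ℝ ψ x) x :=
    (hC.differentiable one_ne_zero x).hasFDerivAt
  rw [show x = Function.update x j (x j) by simp] at hψ
  have := hψ.comp_hasDerivAt (x j) hupd
  simp only [Function.update_idem, Function.update_eq_self] at this
  exact this.deriv

/-- Identity (eq:DS): in the large graph limit of the multilayer SIR process, if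
`Θⱼ' = −βⱼ·SIⱼ/(α_S·∂ⱼψ(Θ))` and `S' = −∑ⱼ βⱼ·SIⱼ` with `Θ(0) = 𝟏`, `S(0) = α_S`,
then `S(t) = α_S·ψ(Θ(t))` on `[0,T]`. -/
theorem susceptible_eq_psi_theta (r : ℕ) (hr : 1 ≤ r) (ψ : (Fin r → ℝ) → ℝ)
    (hC : ContDiff ℝ 1 ψ) (hψ1 : ψ (fun _ => 1) = 1)
    (β : Fin r → ℝ) (αS : ℝ) (hαS : 0 < αS) (T : ℝ) (hT : 0 < T)
    (S : ℝ → ℝ) (Θ : ℝ → Fin r → ℝ) (SI : ℝ → Fin r → ℝ)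
    (hpd : ∀ t ∈ Set.Icc (0 : ℝ) T, ∀ j, pd j ψ (Θ t) ≠ 0)
    (hΘ : ∀ t ∈ Set.Icc (0 : ℝ) T, ∀ j, HasDerivAt (fun s => Θ s j)
        (-(β j * SI t j) / (αS * pd j ψ (Θ t))) t)
    (hS : ∀ t ∈ Set.Icc (0 : ℝ) T, HasDerivAt S (-(∑ j, β j * SI t j)) t)
    (hΘ0 : Θ 0 = fun _ => 1) (hS0 : S 0 = αS) :
    ∀ t ∈ Set.Icc (0 : ℝ) T, S t = αS * ψ (Θ t) := by
  set h : ℝ → ℝ := fun t => S t - αS * ψ (Θ t) with hh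
  have key : ∀ t ∈ Set.Icc (0 : ℝ) T, HasDerivAt h 0 t := by
    intro t ht
    have hΘd : HasDerivAt Θ (fun j => -(β j * SI t j) / (αS * pd j ψ (Θ t))) t :=
      hasDerivAt_pi.2 (hΘ t ht)
    have hψd : HasFDerivAt ψ (fderiv ℝ ψ (Θ t)) (Θ t) :=
      (hC.differentiable one_ne_zero (Θ t)).hasFDerivAt
    have hcomp : HasDerivAt (fun s => ψ (Θ s))
        (fderiv ℝ ψ (Θ t) (fun j => -(β j * SI t j) / (αS * pd j ψ (Θ t)))) t :=
      hψd.comp_hasDerivAt t hΘd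
    have hval : fderiv ℝ ψ (Θ t) (fun j => -(β j * SI t j) / (αS * pd j ψ (Θ t)))
        = ∑ j, -(β j * SI t j) / αS := by
      have hdec : (fun j => -(β j * SI t j) / (αS * pd j ψ (Θ t)))
          = ∑ j, (-(β j * SI t j) / (αS * pd j ψ (Θ t))) • (Pi.single j 1 : Fin r → ℝ) := by
        ext i
        simp [Finset.sum_apply, Pi.single_apply]
      rw [hdec, map_sum]
      refine Finset.sum_congr rfl fun j _ => ?_
      rw [map_smul, ← pd_eq_fderiv ψ hC]
      have h1 : pd j ψ (Θ t) ≠ 0 := hpd t ht j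
      rw [smul_eq_mul, div_mul_eq_mul_div, mul_div_mul_right _ _ h1]
    rw [hval] at hcomp
    have := (hS t ht).sub (hcomp.const_mul αS)
    have heq : -(∑ j, β j * SI t j) - αS * ∑ j, -(β j * SI t j) / αS = 0 := by
      rw [Finset.mul_sum]
      have : ∀ j : Fin r, αS * (-(β j * SI t j) / αS) = -(β j * SI t j) := fun j => by
        field_simp
      simp only [this, ← Finset.sum_neg_distrib]
      ring
    rw [heq] at this
    exact this
  have hcont : ContinuousOn h (Set.Icc 0 T) := fun t ht =>
    ((key t ht).continuousAt).continuousWithinAt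
  have hzero : ∀ t ∈ Set.Icc (0 : ℝ) T, h t = h 0 := by
    intro t ht
    exact constant_of_has_deriv_right_zero hcont
      (fun x hx => ((key x (Set.mem_Icc_of_Ico hx)).hasDerivWithinAt)) t ht
  intro t ht
  have := hzero t ht
  simp only [hh, hΘ0, hψ1, hS0] at this
  linarith
end

section
/- Let β > 0, κ ∈ ℝ, μ ≥ 0, α_S > 0 and T > 0. Suppose S, SS : [0,T] → ℝ are differentiable, SI : [0,T] → ℝ, with S(t) > 0 for all t, S'(t) = −β·SI(t), SS'(t) = −2βκ·SS(t)·SI(t)/S(t), S(0) = α_S and SS(0) = μ·α_S². Then SS(t) = α_S^{2(1−κ)}·μ·S(t)^{2κ} for all t ∈ [0,T] (real powers). -/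
/-- Invariant of the pairwise SIR model of Rand: in the system `S' = −β·SI`,
`SS' = −2βκ·SS·SI/S` with `S(0) = α_S`, `SS(0) = μ·α_S²`, one has
`SS = α_S^(2(1−κ))·μ·S^(2κ)` (real powers). -/
theorem pairwise_SS_invariant (β κ μ αS T : ℝ) (hβ : 0 < β) (hμ : 0 ≤ μ)
    (hαS : 0 < αS) (hT : 0 < T)
    (S SS : ℝ → ℝ) (SI : ℝ → ℝ)
    (hSpos : ∀ t ∈ Set.Icc (0 : ℝ) T, 0 < S t)
    (hS : ∀ t ∈ Set.Icc (0 : ℝ) T, HasDerivAt S (-(β * SI t)) t)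
    (hSS : ∀ t ∈ Set.Icc (0 : ℝ) T, HasDerivAt SS (-2 * β * κ * SS t * SI t / S t) t)
    (hS0 : S 0 = αS) (hSS0 : SS 0 = μ * αS ^ 2) :
    ∀ t ∈ Set.Icc (0 : ℝ) T, SS t = αS ^ (2 * (1 - κ)) * μ * S t ^ (2 * κ) := by
  set F : ℝ → ℝ := fun t => SS t * S t ^ (-(2 * κ)) with hF
  have hFd : ∀ t ∈ Set.Icc (0 : ℝ) T, HasDerivAt F 0 t := by
    intro t ht
    have hpos := hSpos t ht
    have h1 : HasDerivAt (fun t => S t ^ (-(2 * κ)))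
        ((-(β * SI t)) * (-(2 * κ)) * S t ^ (-(2 * κ) - 1)) t :=
      (hS t ht).rpow_const (Or.inl hpos.ne')
    have h2 := (hSS t ht).mul h1
    refine h2.congr_deriv ?_
    rw [Real.rpow_sub_one hpos.ne']
    field_simp
    ring
  have hcont : ContinuousOn F (Set.Icc 0 T) := fun t ht =>
    ((hFd t ht).continuousAt).continuousWithinAt
  have hconst : ∀ t ∈ Set.Icc (0 : ℝ) T, F t = F 0 := by
    apply constant_of_has_deriv_right_zero hcont
    intro t ht
    exact (hFd t (Set.mem_Icc_of_Ico ht)).hasDerivWithinAt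
  intro t ht
  have hpos := hSpos t ht
  have key := hconst t ht
  have hSt : S t ^ (-(2 * κ)) * S t ^ (2 * κ) = 1 := by
    rw [← Real.rpow_add hpos]; simp
  have : SS t = F 0 * S t ^ (2 * κ) := by
    calc SS t = SS t * (S t ^ (-(2 * κ)) * S t ^ (2 * κ)) := by rw [hSt, mul_one]
    _ = F t * S t ^ (2 * κ) := by rw [hF]; ring
    _ = F 0 * S t ^ (2 * κ) := by rw [key]
  rw [this, hF]
  simp only [hS0, hSS0]
  have h3 : αS ^ (2 : ℕ) * αS ^ (-(2 * κ)) = αS ^ (2 * (1 - κ)) := by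
    rw [← Real.rpow_natCast αS 2, ← Real.rpow_add hαS]
    norm_num
    rw [show (2 : ℝ) + -(2 * κ) = 2 * (1 - κ) by ring]
  linear_combination μ * S t ^ (2 * κ) * h3
end

section
/- Let β > 0, γ ≥ 0, κ ∈ ℝ with κ ≠ 1, μ ≥ 0, α_S > 0, α_I ≥ 0 and T > 0. Suppose S, SI : [0,T] → ℝ are differentiable with S(t) > 0 and SI(t) > 0 for all t ∈ [0,T], satisfying S'(t) = −β·SI(t) and SI'(t) = βκ·(SS(t)·SI(t) − SI(t)²)/S(t) − (β+γ)·SI(t), where SS(t) := α_S^{2(1−κ)}·μ·S(t)^{2κ}, with S(0) = α_S and SI(0) = α_S·α_I·μ. Then for all t ∈ [0,T] (real powers): SI(t) = ((β+γ)/(β(1−κ)))·S(t) − μ·α_S^{2(1−κ)}·S(t)^{2κ} − ( ((β+γ)/(β(1−κ)))·α_S^{1−κ} − μ·α_S^{2−κ} − α_S^{1−κ}·α_I·μ )·S(t)^{κ}. -/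
/-- Explicit solution (eq:SI), case `κ ≠ 1`, of the pairwise SIR model of Rand:
`SI` can be expressed explicitly as a function of `S` (real powers). -/
theorem pairwise_SI_explicit_ne_one (β γ κ μ αS αI T : ℝ)
    (hβ : 0 < β) (hγ : 0 ≤ γ) (hκ : κ ≠ 1) (hμ : 0 ≤ μ)
    (hαS : 0 < αS) (hαI : 0 ≤ αI) (hT : 0 < T)
    (S SI : ℝ → ℝ)
    (hSpos : ∀ t ∈ Set.Icc (0 : ℝ) T, 0 < S t)
    (hSIpos : ∀ t ∈ Set.Icc (0 : ℝ) T, 0 < SI t)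
    (hS : ∀ t ∈ Set.Icc (0 : ℝ) T, HasDerivAt S (-(β * SI t)) t)
    (hSI : ∀ t ∈ Set.Icc (0 : ℝ) T, HasDerivAt SI
        (β * κ * ((αS ^ (2 * (1 - κ)) * μ * S t ^ (2 * κ)) * SI t - SI t ^ 2) / S t
          - (β + γ) * SI t) t)
    (hS0 : S 0 = αS) (hSI0 : SI 0 = αS * αI * μ) :
    ∀ t ∈ Set.Icc (0 : ℝ) T,
      SI t = (β + γ) / (β * (1 - κ)) * S t - μ * αS ^ (2 * (1 - κ)) * S t ^ (2 * κ)
        - ((β + γ) / (β * (1 - κ)) * αS ^ (1 - κ) - μ * αS ^ (2 - κ)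
            - αS ^ (1 - κ) * αI * μ) * S t ^ κ := by
  have h1κ : (1 : ℝ) - κ ≠ 0 := sub_ne_zero_of_ne (Ne.symm hκ)
  set C1 : ℝ := (β + γ) / (β * (1 - κ)) with hC1
  set A : ℝ := μ * αS ^ (2 * (1 - κ)) with hA
  set C2 : ℝ := C1 * αS ^ (1 - κ) - μ * αS ^ (2 - κ) - αS ^ (1 - κ) * αI * μ with hC2
  set h : ℝ → ℝ := fun u => SI u * S u ^ (-κ)
      - (C1 * S u ^ (1 - κ) - A * S u ^ κ - C2) with hh
  have key : ∀ s ∈ Set.Icc (0 : ℝ) T, HasDerivAt h 0 s := by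
    intro s hs
    have hx : 0 < S s := hSpos s hs
    have hy : 0 < SI s := hSIpos s hs
    have hu : 0 < S s ^ κ := Real.rpow_pos_of_pos hx κ
    have d1 : HasDerivAt (fun u => S u ^ (-κ))
        (-(β * SI s) * (-κ) * S s ^ (-κ - 1)) s :=
      (hS s hs).rpow_const (Or.inl hx.ne')
    have d2 : HasDerivAt (fun u => SI u * S u ^ (-κ))
        ((β * κ * ((αS ^ (2 * (1 - κ)) * μ * S s ^ (2 * κ)) * SI s - SI s ^ 2) / S s
          - (β + γ) * SI s) * S s ^ (-κ)
         + SI s * (-(β * SI s) * (-κ) * S s ^ (-κ - 1))) s :=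
      (hSI s hs).mul d1
    have d3 : HasDerivAt (fun u => S u ^ (1 - κ))
        (-(β * SI s) * (1 - κ) * S s ^ (1 - κ - 1)) s :=
      (hS s hs).rpow_const (Or.inl hx.ne')
    have d4 : HasDerivAt (fun u => S u ^ κ)
        (-(β * SI s) * κ * S s ^ (κ - 1)) s :=
      (hS s hs).rpow_const (Or.inl hx.ne')
    have d5 := d2.sub (((d3.const_mul C1).sub (d4.const_mul A)).sub_const C2)
    refine d5.congr_deriv ?_
    symm
    -- show 0 equals the derivative expression
    have e1 : S s ^ (2 * κ) = (S s ^ κ) ^ 2 := by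
      rw [show (2 : ℝ) * κ = κ * 2 by ring, Real.rpow_mul hx.le]
      rw [show ((2 : ℝ) : ℝ) = ((2 : ℕ) : ℝ) by norm_num, Real.rpow_natCast]
    have e2 : S s ^ (-κ) = (S s ^ κ)⁻¹ := by
      rw [Real.rpow_neg hx.le]
    have e3 : S s ^ (-κ - 1) = (S s ^ κ * S s)⁻¹ := by
      rw [show -κ - 1 = -(κ + 1) by ring, Real.rpow_neg hx.le, Real.rpow_add hx,
        Real.rpow_one]
    have e4 : S s ^ (1 - κ - 1) = (S s ^ κ)⁻¹ := by
      rw [show (1 : ℝ) - κ - 1 = -κ by ring, Real.rpow_neg hx.le]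
    have e5 : S s ^ (κ - 1) = S s ^ κ / S s := by
      rw [Real.rpow_sub hx, Real.rpow_one]
    rw [e1, e2, e3, e4, e5, hC1, hA]
    field_simp
    ring
  have hcont : ContinuousOn h (Set.Icc (0 : ℝ) T) := fun s hs =>
    (key s hs).continuousAt.continuousWithinAt
  have hconst : ∀ t ∈ Set.Icc (0 : ℝ) T, h t = h 0 :=
    constant_of_has_deriv_right_zero hcont
      (fun s hs => (key s (Set.Ico_subset_Icc_self hs)).hasDerivWithinAt)
  have h0 : h 0 = 0 := by
    have h0mem : (0 : ℝ) ∈ Set.Icc (0 : ℝ) T := ⟨le_refl 0, hT.le⟩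
    simp only [hh, hS0, hSI0, hC2, hA]
    have eA : μ * αS ^ (2 * (1 - κ)) * αS ^ κ = μ * αS ^ (2 - κ) := by
      rw [mul_assoc, ← Real.rpow_add hαS]; ring_nf
    have eB : αS ^ (1 - κ) = αS * αS ^ (-κ) := by
      rw [show (1 : ℝ) - κ = 1 + -κ by ring, Real.rpow_add hαS, Real.rpow_one]
    rw [eA, eB]; ring
  intro t ht
  have hx : 0 < S t := hSpos t ht
  have hu : 0 < S t ^ κ := Real.rpow_pos_of_pos hx κ
  have ht0 : h t = 0 := (hconst t ht).trans h0
  have hmain : SI t * S t ^ (-κ) = C1 * S t ^ (1 - κ) - A * S t ^ κ - C2 := by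
    have := sub_eq_zero.mp ht0
    linarith [this]
  have e2 : S t ^ (-κ) = (S t ^ κ)⁻¹ := Real.rpow_neg hx.le κ
  have e6 : S t ^ (1 - κ) * S t ^ κ = S t := by
    rw [← Real.rpow_add hx]; norm_num
  have e1 : S t ^ κ * S t ^ κ = S t ^ (2 * κ) := by
    rw [← Real.rpow_add hx]; ring_nf
  have : SI t = (C1 * S t ^ (1 - κ) - A * S t ^ κ - C2) * S t ^ κ := by
    have := congrArg (· * S t ^ κ) hmain
    simpa [e2, mul_assoc, inv_mul_cancel₀ hu.ne'] using this
  rw [this, sub_mul, sub_mul, mul_assoc C1, e6, mul_assoc A, e1]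
end

section
/- Let β > 0, γ ≥ 0, μ ≥ 0, α_S > 0, α_I ≥ 0 and T > 0. Suppose S, SI : [0,T] → ℝ are differentiable with S(t) > 0 and SI(t) > 0 for all t ∈ [0,T], satisfying S'(t) = −β·SI(t) and SI'(t) = β·(SS(t)·SI(t) − SI(t)²)/S(t) − (β+γ)·SI(t), where SS(t) := μ·S(t)², with S(0) = α_S and SI(0) = α_S·α_I·μ. Then for all t ∈ [0,T]: SI(t) = ((β+γ)/β)·S(t)·log(S(t)) − μ·S(t)² − ( ((β+γ)/β)·log(α_S) − μ·α_S − α_I·μ )·S(t). -/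
/-- Explicit solution (eq:SI), case `κ = 1`, of the pairwise SIR model of Rand:
`SI` can be expressed explicitly as a function of `S`. -/
theorem pairwise_SI_explicit_eq_one (β γ μ αS αI T : ℝ)
    (hβ : 0 < β) (hγ : 0 ≤ γ) (hμ : 0 ≤ μ)
    (hαS : 0 < αS) (hαI : 0 ≤ αI) (hT : 0 < T)
    (S SI : ℝ → ℝ)
    (hSpos : ∀ t ∈ Set.Icc (0 : ℝ) T, 0 < S t)
    (hSIpos : ∀ t ∈ Set.Icc (0 : ℝ) T, 0 < SI t)
    (hS : ∀ t ∈ Set.Icc (0 : ℝ) T, HasDerivAt S (-(β * SI t)) t)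
    (hSI : ∀ t ∈ Set.Icc (0 : ℝ) T, HasDerivAt SI
        (β * ((μ * S t ^ 2) * SI t - SI t ^ 2) / S t - (β + γ) * SI t) t)
    (hS0 : S 0 = αS) (hSI0 : SI 0 = αS * αI * μ) :
    ∀ t ∈ Set.Icc (0 : ℝ) T,
      SI t = (β + γ) / β * S t * Real.log (S t) - μ * S t ^ 2
        - ((β + γ) / β * Real.log αS - μ * αS - αI * μ) * S t := by
  set k : ℝ := (β + γ) / β with hk
  set K : ℝ := k * Real.log αS - μ * αS - αI * μ with hK
  set g : ℝ → ℝ := fun t => SI t / S t - (k * Real.log (S t) - μ * S t - K) with hg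
  have hβ' : β ≠ 0 := ne_of_gt hβ
  have hcont : ContinuousOn g (Set.Icc 0 T) := by
    intro x hx
    have hSne : S x ≠ 0 := ne_of_gt (hSpos x hx)
    have hSc : ContinuousWithinAt S (Set.Icc 0 T) x :=
      (hS x hx).continuousAt.continuousWithinAt
    have hSIc : ContinuousWithinAt SI (Set.Icc 0 T) x :=
      (hSI x hx).continuousAt.continuousWithinAt
    have hlog : ContinuousWithinAt (fun t => Real.log (S t)) (Set.Icc 0 T) x :=
      (Real.continuousAt_log hSne).comp_continuousWithinAt hSc
    exact ((hSIc.div hSc hSne).sub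
      (((continuousWithinAt_const.mul hlog).sub
        (continuousWithinAt_const.mul hSc)).sub continuousWithinAt_const))
  have hderiv : ∀ x ∈ Set.Ico 0 T, HasDerivWithinAt g 0 (Set.Ici x) x := by
    intro x hx
    have hx' : x ∈ Set.Icc 0 T := Set.mem_Icc.2 ⟨hx.1, le_of_lt hx.2⟩
    have hSne : S x ≠ 0 := ne_of_gt (hSpos x hx')
    have hS' := hS x hx'
    have hSI' := hSI x hx'
    have hdiv : HasDerivAt (fun t => SI t / S t)
        (((β * ((μ * S x ^ 2) * SI x - SI x ^ 2) / S x - (β + γ) * SI x) * S x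
          - SI x * -(β * SI x)) / S x ^ 2) x := hSI'.div hS' hSne
    have hlog : HasDerivAt (fun t => Real.log (S t)) (-(β * SI x) / S x) x :=
      hS'.log hSne
    have hrhs : HasDerivAt (fun t => k * Real.log (S t) - μ * S t - K)
        (k * (-(β * SI x) / S x) - μ * -(β * SI x) - 0) x :=
      ((hlog.const_mul k).sub (hS'.const_mul μ)).sub (hasDerivAt_const x K)
    have := hdiv.sub hrhs
    have heq : ((β * ((μ * S x ^ 2) * SI x - SI x ^ 2) / S x - (β + γ) * SI x) * S x
          - SI x * -(β * SI x)) / S x ^ 2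
        - (k * (-(β * SI x) / S x) - μ * -(β * SI x) - 0) = 0 := by
      rw [hk]; field_simp; ring
    rw [heq] at this
    exact this.hasDerivWithinAt
  have hg0 : g 0 = 0 := by
    have hSne : (αS : ℝ) ≠ 0 := ne_of_gt hαS
    simp only [hg, hS0, hSI0, hK]
    field_simp
    ring
  intro t ht
  have hgt : g t = g 0 := constant_of_has_deriv_right_zero hcont hderiv t ht
  rw [hg0] at hgt
  have hSne : S t ≠ 0 := ne_of_gt (hSpos t ht)
  have : SI t / S t = k * Real.log (S t) - μ * S t - K := by
    have := sub_eq_zero.mp hgt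
    linarith [this]
  have h2 : SI t = (k * Real.log (S t) - μ * S t - K) * S t := by
    field_simp at this
    linarith [this]
  rw [h2, hK, hk]; ring
end

section
/- Let β_C, β_H, μ_C, μ_H, γ, δ, η, κ_CC, κ_HH, κ_CH be real numbers with d_C := β_C + γ + δ ≠ 0, d_H := β_H + γ ≠ 0 and d_E := η + γ ≠ 0. Let M be the 4×4 real matrix with rows: row 1 = (0, β_C/d_C, β_H/d_H, β_H·η/(d_H·d_E)); row 2 = (0, β_C·κ_CC·μ_C/d_C, β_H·κ_CH·μ_C/d_H, β_H·κ_CH·μ_C·η/(d_H·d_E)); row 3 = (0, 0, 0, 0); row 4 = (0, β_C·κ_CH·μ_H/d_C, β_H·κ_HH·μ_H/d_H, β_H·κ_HH·μ_H·η/(d_H·d_E)). Then the characteristic polynomial of M equals X²·( X² − (R_C + R_H)·X + (κ_CC·κ_HH − κ_CH²)·β_C·β_H·μ_C·μ_H·η/(d_C·d_H·d_E) ), where R_C = β_C·κ_CC·μ_C/d_C and R_H = β_H·κ_HH·μ_H·η/(d_H·d_E). -/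
open Polynomial


set_option maxHeartbeats 1000000 in
lemma aux_charpoly (a2 a3 a4 b2 b3 b4 d2 d3 d4 : ℝ) :
    (!![0, a2, a3, a4; 0, b2, b3, b4; 0, 0, 0, 0; 0, d2, d3, d4] :
      Matrix (Fin 4) (Fin 4) ℝ).charpoly
      = X ^ 2 * (X ^ 2 - C (b2 + d4) * X + C (b2 * d4 - b4 * d2)) := by
  rw [Matrix.charpoly]
  simp [Matrix.charmatrix, Matrix.det_succ_row_zero, Fin.sum_univ_succ,
    Matrix.diagonal_apply]
  ring


set_option maxHeartbeats 1000000 in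
/-- Characteristic polynomial of the next-generation matrix `F·V⁻¹` of the two-layer
community-healthcare SIdaR model: it equals
`X²·(X² − (R_C + R_H)·X + (κ_CC·κ_HH − κ_CH²)·β_C·β_H·μ_C·μ_H·η/(d_C·d_H·d_E))`. -/
theorem next_generation_charpoly (βC βH μC μH γ δ η κCC κHH κCH : ℝ)
    (hdC : βC + γ + δ ≠ 0) (hdH : βH + γ ≠ 0) (hdE : η + γ ≠ 0) :
    let dC := βC + γ + δ
    let dH := βH + γ
    let dE := η + γ
    let M : Matrix (Fin 4) (Fin 4) ℝ :=
      !![0, βC / dC, βH / dH, βH * η / (dH * dE);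
         0, βC * κCC * μC / dC, βH * κCH * μC / dH, βH * κCH * μC * η / (dH * dE);
         0, 0, 0, 0;
         0, βC * κCH * μH / dC, βH * κHH * μH / dH, βH * κHH * μH * η / (dH * dE)]
    M.charpoly = X ^ 2 * (X ^ 2
      - C (βC * κCC * μC / dC + βH * κHH * μH * η / (dH * dE)) * X
      + C ((κCC * κHH - κCH ^ 2) * βC * βH * μC * μH * η / (dC * dH * dE))) := by
  intro dC dH dE M
  rw [show M = !![0, βC / dC, βH / dH, βH * η / (dH * dE);
         0, βC * κCC * μC / dC, βH * κCH * μC / dH, βH * κCH * μC * η / (dH * dE);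
         0, 0, 0, 0;
         0, βC * κCH * μH / dC, βH * κHH * μH / dH, βH * κHH * μH * η / (dH * dE)] from rfl,
     aux_charpoly]
  have h1 : βC * κCC * μC / dC + βH * κHH * μH * η / (dH * dE)
      = βC * κCC * μC / dC + βH * κHH * μH * η / (dH * dE) := rfl
  have h2 : βC * κCC * μC / dC * (βH * κHH * μH * η / (dH * dE))
      - βH * κCH * μC * η / (dH * dE) * (βC * κCH * μH / dC)
      = (κCC * κHH - κCH ^ 2) * βC * βH * μC * μH * η / (dC * dH * dE) := by
    field_simp
  rw [h2]
end

section
/- Let n ≥ 1, let V be an invertible n×n real matrix, let Π, b ∈ ℝⁿ, let β ∈ ℝ, and let T > 0. Suppose x : [0,T] → ℝⁿ and y : [0,T] → ℝ are differentiable with y(t) > 0 for all t ∈ [0,T], and satisfy x'(t) = β·y(t)·(b ⋅ x(t))·Π − V·x(t) and y'(t) = −β·y(t)·(b ⋅ x(t)) for all t ∈ [0,T], where ⋅ denotes the dot product and V·x matrix–vector multiplication. Then for all t ∈ [0,T]: log(y(t)/y(0)) = −β·( b ⋅ V⁻¹·( Π·(y(0) − y(t)) + (x(0) − x(t)) ) ).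 -/
open Matrix

private lemma dot_hasDerivAt {n : ℕ} (c : Fin n → ℝ) {u : ℝ → Fin n → ℝ}
    {u' : Fin n → ℝ} {t : ℝ} (h : HasDerivAt u u' t) :
    HasDerivAt (fun s => c ⬝ᵥ u s) (c ⬝ᵥ u') t := by
  simp only [dotProduct]
  exact HasDerivAt.fun_sum fun i _ => ((hasDerivAt_pi.mp h) i).const_mul (c i)

/-- Integration identity of Arino et al. (Appendix C.2): for epidemic systems of the
form `x' = β·y·(b⋅x)·Π − V·x`, `y' = −β·y·(b⋅x)`, one has
`log(y(t)/y(0)) = −β·b⋅V⁻¹·(Π·(y(0) − y(t)) + (x(0) − x(t)))`. -/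
theorem arino_integration_identity (n : ℕ) (hn : 1 ≤ n)
    (V : Matrix (Fin n) (Fin n) ℝ) (hV : IsUnit V.det)
    (Pv b : Fin n → ℝ) (β T : ℝ) (hT : 0 < T)
    (x : ℝ → Fin n → ℝ) (y : ℝ → ℝ)
    (hypos : ∀ t ∈ Set.Icc (0 : ℝ) T, 0 < y t)
    (hx : ∀ t ∈ Set.Icc (0 : ℝ) T, HasDerivAt x
        ((β * y t * (b ⬝ᵥ x t)) • Pv - V.mulVec (x t)) t)
    (hy : ∀ t ∈ Set.Icc (0 : ℝ) T, HasDerivAt y (-(β * y t * (b ⬝ᵥ x t))) t) :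
    ∀ t ∈ Set.Icc (0 : ℝ) T,
      Real.log (y t / y 0)
        = -(β * (b ⬝ᵥ V⁻¹.mulVec ((y 0 - y t) • Pv + (x 0 - x t)))) := by
  set c : Fin n → ℝ := b ᵥ* V⁻¹ with hc
  have hkey1 : ∀ w : Fin n → ℝ, b ⬝ᵥ V⁻¹.mulVec w = c ⬝ᵥ w := fun w =>
    dotProduct_mulVec b V⁻¹ w
  have hVinv : V⁻¹ * V = 1 := nonsing_inv_mul V hV
  have hkey2 : ∀ v : Fin n → ℝ, c ⬝ᵥ V.mulVec v = b ⬝ᵥ v := by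
    intro v
    rw [← hkey1, mulVec_mulVec, hVinv, one_mulVec]
  set F : ℝ → ℝ := fun s => Real.log (y s) - β * (c ⬝ᵥ (y s • Pv + x s)) with hF
  have hFd : ∀ s ∈ Set.Icc (0 : ℝ) T, HasDerivAt F 0 s := by
    intro s hs
    have hys := hypos s hs
    have h1 := (hy s hs).log hys.ne'
    have h2 : HasDerivAt (fun r => y r • Pv + x r) (-(V.mulVec (x s))) s := by
      have h := ((hy s hs).smul_const Pv).add (hx s hs)
      refine h.congr_deriv ?_
      simp only [neg_smul]
      abel
    have h3 := (dot_hasDerivAt c h2).const_mul β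
    have h4 := h1.sub h3
    refine h4.congr_deriv ?_
    rw [dotProduct_neg, hkey2]
    field_simp
    ring
  have hcont : ContinuousOn F (Set.Icc 0 T) := fun s hs =>
    ((hFd s hs).continuousAt).continuousWithinAt
  have hconst : ∀ s ∈ Set.Icc (0 : ℝ) T, F s = F 0 :=
    constant_of_has_deriv_right_zero hcont fun s hs =>
      (hFd s (Set.Ico_subset_Icc_self hs)).hasDerivWithinAt
  intro t ht
  have h0 : (0 : ℝ) ∈ Set.Icc (0 : ℝ) T := ⟨le_refl 0, hT.le⟩
  have hyt := hypos t ht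
  have hy0 := hypos 0 h0
  have hFt := hconst t ht
  have hw : (y 0 - y t) • Pv + (x 0 - x t)
      = (y 0 • Pv + x 0) - (y t • Pv + x t) := by
    simp only [sub_smul]; abel
  rw [Real.log_div hyt.ne' hy0.ne', hkey1, hw, dotProduct_sub]
  simp only [hF] at hFt
  linarith
end

section
/- Let β_C, β_H, γ, η > 0, δ ≥ 0, μ_C, μ_H ≥ 0, α_S > 0, α_I ≥ 0, and T > 0. Define ℛ_0 = β_C·μ_C/(β_C+γ+δ) + β_H·μ_H·η/((β_H+γ)(η+γ)). Suppose S, Q_C, Q_H, Q̃_H : [0,T] → ℝ are differentiable with S(t) > 0 for all t ∈ [0,T], and satisfy: S' = −(β_C·Q_C + β_H·Q_H)·S; Q_C' = μ_C·(β_C·Q_C + β_H·Q_H)·S − (β_C+γ+δ)·Q_C; Q_H' = −(β_H+γ)·Q_H + η·Q̃_H; Q̃_H' = μ_H·(β_C·Q_C + β_H·Q_H)·S − (η+γ)·Q̃_H; with initial conditions S(0) = α_S, Q_C(0) = μ_C·α_I, Q_H(0) = 0, Q̃_H(0) = μ_H·α_I. Then for all t ∈ [0,T]: log(S(t)/α_S)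 = −ℛ_0·(α_S + α_I − S(t)) + (β_C/(β_C+γ+δ))·Q_C(t) + (β_H/(β_H+γ))·Q_H(t) + (β_H·η/((β_H+γ)(η+γ)))·Q̃_H(t). -/
/-- Invariant (CHinv) of the community-healthcare model in the case of independent
layers with Poisson degree distributions, in the transformed variables
`Q_C = [SI]_C/S`, `Q_H = [SI]_H/S`, `Q̃_H = [S̃I]_H/S`. -/
theorem community_healthcare_invariant (βC βH γ η δ μC μH αS αI T : ℝ)
    (hβC : 0 < βC) (hβH : 0 < βH) (hγ : 0 < γ) (hη : 0 < η) (hδ : 0 ≤ δ)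
    (hμC : 0 ≤ μC) (hμH : 0 ≤ μH) (hαS : 0 < αS) (hαI : 0 ≤ αI) (hT : 0 < T)
    (S QC QH QtH : ℝ → ℝ)
    (hSpos : ∀ t ∈ Set.Icc (0 : ℝ) T, 0 < S t)
    (hS : ∀ t ∈ Set.Icc (0 : ℝ) T, HasDerivAt S (-((βC * QC t + βH * QH t) * S t)) t)
    (hQC : ∀ t ∈ Set.Icc (0 : ℝ) T, HasDerivAt QC
        (μC * (βC * QC t + βH * QH t) * S t - (βC + γ + δ) * QC t) t)
    (hQH : ∀ t ∈ Set.Icc (0 : ℝ) T, HasDerivAt QH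
        (-((βH + γ) * QH t) + η * QtH t) t)
    (hQtH : ∀ t ∈ Set.Icc (0 : ℝ) T, HasDerivAt QtH
        (μH * (βC * QC t + βH * QH t) * S t - (η + γ) * QtH t) t)
    (hS0 : S 0 = αS) (hQC0 : QC 0 = μC * αI) (hQH0 : QH 0 = 0)
    (hQtH0 : QtH 0 = μH * αI) :
    ∀ t ∈ Set.Icc (0 : ℝ) T,
      Real.log (S t / αS)
        = -((βC * μC / (βC + γ + δ) + βH * μH * η / ((βH + γ) * (η + γ)))
              * (αS + αI - S t))
          + (βC / (βC + γ + δ)) * QC t + (βH / (βH + γ)) * QH t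
          + (βH * η / ((βH + γ) * (η + γ))) * QtH t := by
  have ha : (0:ℝ) < βC + γ + δ := by linarith
  have hb : (0:ℝ) < βH + γ := by linarith
  have hc : (0:ℝ) < η + γ := by linarith
  set R0 : ℝ := βC * μC / (βC + γ + δ) + βH * μH * η / ((βH + γ) * (η + γ)) with hR0
  set aC : ℝ := βC / (βC + γ + δ) with haC
  set aH : ℝ := βH / (βH + γ) with haH
  set atH : ℝ := βH * η / ((βH + γ) * (η + γ)) with hatH
  set F : ℝ → ℝ := fun t => Real.log (S t) - R0 * S t - aC * QC t - aH * QH t - atH * QtH t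
    with hF
  have hFderiv : ∀ x ∈ Set.Icc (0:ℝ) T, HasDerivAt F 0 x := by
    intro x hx
    have hSx := hS x hx
    have hQCx := hQC x hx
    have hQHx := hQH x hx
    have hQtHx := hQtH x hx
    have hSne : S x ≠ 0 := (hSpos x hx).ne'
    have hlog : HasDerivAt (fun t => Real.log (S t))
        (-((βC * QC x + βH * QH x) * S x) / S x) x := hSx.log hSne
    have h := (((hlog.sub ((hSx.const_mul R0))).sub (hQCx.const_mul aC)).sub
        (hQHx.const_mul aH)).sub (hQtHx.const_mul atH)
    refine HasDerivAt.congr_deriv h ?_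
    symm
    rw [haC, haH, hatH, hR0]
    field_simp
    ring
  have hcont : ContinuousOn F (Set.Icc (0:ℝ) T) := fun x hx =>
    ((hFderiv x hx).continuousAt).continuousWithinAt
  have hconst : ∀ x ∈ Set.Icc (0:ℝ) T, F x = F 0 := by
    apply constant_of_has_deriv_right_zero hcont
    intro x hx
    exact ((hFderiv x (Set.mem_Icc_of_Ico hx)).hasDerivWithinAt)
  intro t ht
  have hFt := hconst t ht
  have hSt : 0 < S t := hSpos t ht
  rw [hF] at hFt
  simp only [hS0, hQC0, hQH0, hQtH0] at hFt
  rw [Real.log_div hSt.ne' hαS.ne']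
  have hR0split : R0 = aC * μC + atH * μH := by
    rw [hR0, haC, hatH]; ring
  have : Real.log (S t) - R0 * S t - aC * QC t - aH * QH t - atH * QtH t
      = Real.log αS - R0 * αS - aC * (μC * αI) - aH * 0 - atH * (μH * αI) := hFt
  linear_combination this + (αI : ℝ) * hR0split
end

section
/- Let β_C, β_H, γ, η > 0, δ ≥ 0, μ_C, μ_H ≥ 0, α_S > 0, α_I ≥ 0, and define ℛ_0 = β_C·μ_C/(β_C+γ+δ) + β_H·μ_H·η/((β_H+γ)(η+γ)). Suppose S, Q_C, Q_H, Q̃_H : [0,∞) → ℝ are differentiable with S(t) > 0 for all t ≥ 0, and satisfy: S' = −(β_C·Q_C + β_H·Q_H)·S; Q_C' = μ_C·(β_C·Q_C + β_H·Q_H)·S − (β_C+γ+δ)·Q_C; Q_H' = −(β_H+γ)·Q_H + η·Q̃_H; Q̃_H' = μ_H·(β_C·Q_C + β_H·Q_H)·S − (η+γ)·Q̃_H; with S(0) = α_S, Q_C(0) = μ_C·α_I, Q_H(0) = 0, Q̃_H(0) = μ_H·α_I. Suppose further that as t → ∞, S(t) → S_∞ for some S_∞ > 0, and Q_C(t) →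 0, Q_H(t) → 0, Q̃_H(t) → 0. Then log(S_∞/α_S) = −ℛ_0·(α_S + α_I − S_∞). -/
/-- Final size relation (CHfinal) of the community-healthcare model in the case of
independent layers with Poisson degree distributions: if `S(t) → S_∞ > 0` and the
infected dyad densities tend to zero, then `log(S_∞/α_S) = −ℛ₀·(α_S + α_I − S_∞)`. -/
theorem community_healthcare_final_size (βC βH γ η δ μC μH αS αI Sinf : ℝ)
    (hβC : 0 < βC) (hβH : 0 < βH) (hγ : 0 < γ) (hη : 0 < η) (hδ : 0 ≤ δ)
    (hμC : 0 ≤ μC) (hμH : 0 ≤ μH) (hαS : 0 < αS) (hαI : 0 ≤ αI)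
    (S QC QH QtH : ℝ → ℝ)
    (hSpos : ∀ t : ℝ, 0 ≤ t → 0 < S t)
    (hS : ∀ t : ℝ, 0 ≤ t → HasDerivAt S (-((βC * QC t + βH * QH t) * S t)) t)
    (hQC : ∀ t : ℝ, 0 ≤ t → HasDerivAt QC
        (μC * (βC * QC t + βH * QH t) * S t - (βC + γ + δ) * QC t) t)
    (hQH : ∀ t : ℝ, 0 ≤ t → HasDerivAt QH (-((βH + γ) * QH t) + η * QtH t) t)
    (hQtH : ∀ t : ℝ, 0 ≤ t → HasDerivAt QtH
        (μH * (βC * QC t + βH * QH t) * S t - (η + γ) * QtH t) t)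
    (hS0 : S 0 = αS) (hQC0 : QC 0 = μC * αI) (hQH0 : QH 0 = 0)
    (hQtH0 : QtH 0 = μH * αI)
    (hSinf : 0 < Sinf)
    (hSlim : Filter.Tendsto S Filter.atTop (nhds Sinf))
    (hQClim : Filter.Tendsto QC Filter.atTop (nhds 0))
    (hQHlim : Filter.Tendsto QH Filter.atTop (nhds 0))
    (hQtHlim : Filter.Tendsto QtH Filter.atTop (nhds 0)) :
    Real.log (Sinf / αS)
      = -((βC * μC / (βC + γ + δ) + βH * μH * η / ((βH + γ) * (η + γ)))
            * (αS + αI - Sinf)) := by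
  have hapos : (0:ℝ) < βC + γ + δ := by linarith
  have hbpos : (0:ℝ) < βH + γ := by linarith
  have hcpos : (0:ℝ) < η + γ := by linarith
  set a := βC + γ + δ with ha
  set b := βH + γ with hb
  set c := η + γ with hc
  set R0 := βC * μC / a + βH * μH * η / (b * c) with hR0
  set F : ℝ → ℝ := fun t => Real.log (S t) - (βC / a) * QC t - (βH / b) * QH t
      - (βH * η / (b * c)) * QtH t - R0 * S t with hF
  have hFderiv : ∀ t : ℝ, 0 ≤ t → HasDerivAt F 0 t := by
    intro t ht
    have h1 := (hS t ht).log (hSpos t ht).ne'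
    have hd := ((((h1.sub ((hQC t ht).const_mul (βC / a))).sub
        ((hQH t ht).const_mul (βH / b))).sub
        ((hQtH t ht).const_mul (βH * η / (b * c)))).sub
        ((hS t ht).const_mul R0))
    refine hd.congr_deriv ?_
    have hSne := (hSpos t ht).ne'
    rw [hR0, neg_div, mul_div_assoc, div_self hSne]; field_simp
    ring
  have hconst : ∀ t : ℝ, 0 ≤ t → F t = F 0 := by
    intro t ht
    have hcont : ContinuousOn F (Set.Icc 0 t) := fun x hx =>
      ((hFderiv x hx.1).continuousAt).continuousWithinAt
    have := constant_of_has_deriv_right_zero hcont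
      (fun x hx => (hFderiv x hx.1).hasDerivWithinAt)
    exact this t (Set.right_mem_Icc.mpr ht)
  have hFlim1 : Filter.Tendsto F Filter.atTop (nhds (F 0)) := by
    apply Filter.Tendsto.congr' _ tendsto_const_nhds
    filter_upwards [Filter.eventually_ge_atTop (0:ℝ)] with t ht
    exact (hconst t ht).symm
  have hFlim2 : Filter.Tendsto F Filter.atTop
      (nhds (Real.log Sinf - (βC / a) * 0 - (βH / b) * 0 - (βH * η / (b * c)) * 0
        - R0 * Sinf)) := by
    refine Filter.Tendsto.sub (Filter.Tendsto.sub (Filter.Tendsto.sub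
      (Filter.Tendsto.sub ?_ (hQClim.const_mul _)) (hQHlim.const_mul _))
      (hQtHlim.const_mul _)) (hSlim.const_mul _)
    exact ((Real.continuousAt_log hSinf.ne').tendsto).comp hSlim
  have key := tendsto_nhds_unique hFlim1 hFlim2
  have hF0 : F 0 = Real.log αS - (βC / a) * (μC * αI)
      - (βH * η / (b * c)) * (μH * αI) - R0 * αS := by
    simp only [hF, hS0, hQC0, hQH0, hQtH0, mul_zero]
    ring
  rw [hF0] at key
  rw [Real.log_div hSinf.ne' hαS.ne']
  have hane := hapos.ne'
  have hbne := hbpos.ne'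
  have hcne := hcpos.ne'
  rw [hR0] at key ⊢
  field_simp at key ⊢
  ring_nf at key ⊢
  linarith [key]
end

section
/- Let β_C, β_H > 0, κ_CC, κ_HH, κ_CH ∈ ℝ with κ_CH ≠ κ_CC, μ_C > 0, μ_H ≥ 0, α_S > 0 and T > 0. Define σ = (κ_HH − κ_CH)/(κ_CH − κ_CC) and λ = (κ_CH² − κ_CC·κ_HH)/(κ_CH − κ_CC). Suppose S, SSC, SSH : [0,T] → ℝ are differentiable with S(t) > 0 and SSC(t) > 0 for all t ∈ [0,T], SI_C, SI_H : [0,T] → ℝ, and: S' = −β_C·SI_C − β_H·SI_H; SSC' = −2·(β_C·κ_CC·SI_C + β_H·κ_CH·SI_H)·SSC/S; SSH' = −2·(β_C·κ_CH·SI_C + β_H·κ_HH·SI_H)·SSH/S; with S(0) = α_S, SSC(0) = μ_C·α_S², SSH(0) = μ_H·α_S². Then for all t ∈ [0,T] (real powers): SSH(t) = (μ_H·α_S^{2(1−σ−λ)}/μ_C^{σ})·SSC(t)^{σ}·S(t)^{2λ}. -/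
/-- Invariant (inv1) of the community-healthcare limiting system: when `κ_CH ≠ κ_CC`,
with `σ = (κ_HH − κ_CH)/(κ_CH − κ_CC)` and `λ = (κ_CH² − κ_CC·κ_HH)/(κ_CH − κ_CC)`,
the dyad density `[S̃S]_H` satisfies
`SSH = (μ_H·α_S^(2(1−σ−λ))/μ_C^σ)·SSC^σ·S^(2λ)` (real powers). -/
theorem community_healthcare_SSH_invariant (βC βH κCC κHH κCH μC μH αS T : ℝ)
    (hβC : 0 < βC) (hβH : 0 < βH) (hne : κCH ≠ κCC) (hμC : 0 < μC) (hμH : 0 ≤ μH)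
    (hαS : 0 < αS) (hT : 0 < T)
    (S SSC SSH SIC SIH : ℝ → ℝ)
    (hSpos : ∀ t ∈ Set.Icc (0 : ℝ) T, 0 < S t)
    (hSSCpos : ∀ t ∈ Set.Icc (0 : ℝ) T, 0 < SSC t)
    (hS : ∀ t ∈ Set.Icc (0 : ℝ) T, HasDerivAt S (-(βC * SIC t) - βH * SIH t) t)
    (hSSC : ∀ t ∈ Set.Icc (0 : ℝ) T, HasDerivAt SSC
        (-2 * (βC * κCC * SIC t + βH * κCH * SIH t) * SSC t / S t) t)
    (hSSH : ∀ t ∈ Set.Icc (0 : ℝ) T, HasDerivAt SSH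
        (-2 * (βC * κCH * SIC t + βH * κHH * SIH t) * SSH t / S t) t)
    (hS0 : S 0 = αS) (hSSC0 : SSC 0 = μC * αS ^ 2) (hSSH0 : SSH 0 = μH * αS ^ 2) :
    ∀ t ∈ Set.Icc (0 : ℝ) T,
      SSH t = μH * αS ^ (2 * (1 - (κHH - κCH) / (κCH - κCC)
                - (κCH ^ 2 - κCC * κHH) / (κCH - κCC)))
          / μC ^ ((κHH - κCH) / (κCH - κCC))
          * SSC t ^ ((κHH - κCH) / (κCH - κCC))
          * S t ^ (2 * ((κCH ^ 2 - κCC * κHH) / (κCH - κCC))) := by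
  have hΔ : κCH - κCC ≠ 0 := sub_ne_zero.mpr hne
  set σ : ℝ := (κHH - κCH) / (κCH - κCC) with hσdef
  set lam : ℝ := (κCH ^ 2 - κCC * κHH) / (κCH - κCC) with hlamdef
  have hid1 : κCH - σ * κCC - lam = 0 := by
    rw [hσdef, hlamdef]; field_simp; ring
  have hid2 : κHH - σ * κCH - lam = 0 := by
    rw [hσdef, hlamdef]; field_simp; ring
  clear_value σ lam
  set F : ℝ → ℝ := fun t => SSH t * (SSC t ^ (-σ) * S t ^ (-(2 * lam))) with hFdef
  have hF : ∀ t ∈ Set.Icc (0 : ℝ) T, HasDerivAt F 0 t := by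
    intro t ht
    have hSt := hSpos t ht
    have hCt := hSSCpos t ht
    have d1 : HasDerivAt (fun u => SSC u ^ (-σ))
        ((-2 * (βC * κCC * SIC t + βH * κCH * SIH t) * SSC t / S t) * (-σ)
          * SSC t ^ (-σ - 1)) t :=
      (hSSC t ht).rpow_const (Or.inl hCt.ne')
    have d2 : HasDerivAt (fun u => S u ^ (-(2 * lam)))
        ((-(βC * SIC t) - βH * SIH t) * (-(2 * lam)) * S t ^ (-(2 * lam) - 1)) t :=
      (hS t ht).rpow_const (Or.inl hSt.ne')
    have := (hSSH t ht).mul (d1.mul d2)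
    convert this using 1
    case e'_4 => rfl
    case e'_5 => rfl
    case e'_8 => rfl
    have e1 : SSC t ^ (-σ - 1) = SSC t ^ (-σ) / SSC t := by
      rw [show (-σ - 1 : ℝ) = -σ - 1 from rfl, Real.rpow_sub hCt, Real.rpow_one]
    have e2 : S t ^ (-(2 * lam) - 1) = S t ^ (-(2 * lam)) / S t := by
      rw [Real.rpow_sub hSt, Real.rpow_one]
    simp only [Pi.mul_apply]
    rw [e1, e2]
    field_simp
    linear_combination (2 * βC * SIC t * SSH t * SSC t ^ (-σ) * S t ^ (-(2*lam))) * hid1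
      + (2 * βH * SIH t * SSH t * SSC t ^ (-σ) * S t ^ (-(2*lam))) * hid2
  have hcont : ContinuousOn F (Set.Icc 0 T) := fun t ht =>
    (hF t ht).continuousAt.continuousWithinAt
  have hconst := constant_of_has_deriv_right_zero hcont
    (fun t ht => ((hF t (Set.Ico_subset_Icc_self ht)).hasDerivWithinAt))
  intro t ht
  have hFt : F t = F 0 := hconst t ht
  have hSt := hSpos t ht
  have hCt := hSSCpos t ht
  have h0 : (0 : ℝ) ∈ Set.Icc (0 : ℝ) T := ⟨le_refl _, hT.le⟩
  have hF0 : F 0 = μH * αS ^ (2 * (1 - σ - lam)) / μC ^ σ := by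
    rw [hFdef]
    simp only [hS0, hSSC0, hSSH0]
    rw [Real.mul_rpow hμC.le (sq_nonneg αS), ← Real.rpow_natCast αS 2,
      ← Real.rpow_mul hαS.le, Real.rpow_neg hμC.le, div_eq_mul_inv]
    rw [show μH * αS ^ ((2:ℕ):ℝ) * ((μC ^ σ)⁻¹ * αS ^ (((2:ℕ):ℝ) * -σ) * αS ^ (-(2 * lam)))
        = μH * (μC ^ σ)⁻¹ * (αS ^ (((2:ℕ):ℝ)) * αS ^ (((2:ℕ):ℝ) * -σ) * αS ^ (-(2 * lam)))
      from by ring]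
    rw [← Real.rpow_add hαS, ← Real.rpow_add hαS,
      show ((2:ℕ):ℝ) + ((2:ℕ):ℝ) * -σ + -(2 * lam) = 2 * (1 - σ - lam) by push_cast; ring]
    ring
  have hone : SSC t ^ (-σ) * S t ^ (-(2 * lam)) * (SSC t ^ σ * S t ^ (2 * lam)) = 1 := by
    rw [Real.rpow_neg hCt.le, Real.rpow_neg hSt.le]
    have h1 : SSC t ^ σ ≠ 0 := (Real.rpow_pos_of_pos hCt σ).ne'
    have h2 : S t ^ (2 * lam) ≠ 0 := (Real.rpow_pos_of_pos hSt _).ne'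
    field_simp
  have key : SSH t = F t * (SSC t ^ σ * S t ^ (2 * lam)) := by
    rw [hFdef]
    simp only []
    rw [mul_assoc, hone, mul_one]
  rw [key, hFt, hF0]
  ring
end
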